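/- Let w_1, ..., w_n ∈ [0, π/2) with n ≥ 4 and set r_i = 1/cos(w_i). Then there exist points P_1, ..., P_n in ℝ³ with ‖P_i‖ = r_i such that every P_i is an extreme point of the convex hull of {P_1, ..., P_n} and the origin is in the interior of the convex hull. -/

import Mathlib

open Real Finset RealInnerProductSpace

set_option linter.unusedSectionVars false

namespace Stmt13Aux

variable {n : ℕ}

noncomputable def A2 (r : Fin n → ℝ) : ℝ := 1 + ∑ i, r i ^ 2

noncomputable def ss (r : Fin n → ℝ) (i : Fin n) : ℝ :=
  Real.sqrt ((A2 r - r i ^ 2) / (4 * A2 r - 1))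

noncomputable def rho (r : Fin n → ℝ) (i : Fin n) : ℝ :=
  Real.sqrt (r i ^ 2 - ss r i ^ 2)

noncomputable def tau (i : Fin n) : ℝ := (i : ℕ) - 2

noncomputable def cc (i : Fin n) : ℝ :=
  if (i : ℕ) = 0 then 1 else if (i : ℕ) = 1 then -1 else
  if (i : ℕ) = 2 then 0 else if (i : ℕ) = 3 then 0 else
  (1 - tau i ^ 2) / (1 + tau i ^ 2)

noncomputable def tt (i : Fin n) : ℝ :=
  if (i : ℕ) = 0 then 0 else if (i : ℕ) = 1 then 0 else
  if (i : ℕ) = 2 then 1 else if (i : ℕ) = 3 then -1 else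
  2 * tau i / (1 + tau i ^ 2)

noncomputable def eps (i : Fin n) : ℝ := if (i : ℕ) ≤ 1 then 1 else -1

section basic
variable (r : Fin n → ℝ) (hr : ∀ i, 1 ≤ r i)
include hr

lemma r_pos (i : Fin n) : 0 < r i := lt_of_lt_of_le one_pos (hr i)

lemma A2_ge (i : Fin n) : r i ^ 2 + 1 ≤ A2 r := by
  have h1 : r i ^ 2 ≤ ∑ j, r j ^ 2 :=
    Finset.single_le_sum (f := fun j => r j ^ 2) (fun j _ => sq_nonneg _) (mem_univ i)
  simp only [A2]; linarith

lemma A2_pos : 0 < A2 r := by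
  have h1 : (0:ℝ) ≤ ∑ j, r j ^ 2 := Finset.sum_nonneg fun j _ => sq_nonneg _
  simp only [A2]; linarith

lemma ss_sq (i : Fin n) : ss r i ^ 2 = (A2 r - r i ^ 2) / (4 * A2 r - 1) := by
  have hA := A2_ge r hr i
  have hApos := A2_pos r hr
  apply Real.sq_sqrt
  apply div_nonneg <;> nlinarith [sq_nonneg (r i)]

lemma ss_pos (i : Fin n) : 0 < ss r i := by
  have hA := A2_ge r hr i
  have hApos := A2_pos r hr
  apply Real.sqrt_pos.2
  apply div_pos <;> nlinarith

lemma ss_sq_lt_one (i : Fin n) : ss r i ^ 2 < 1 := by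
  rw [ss_sq r hr i]
  have hA := A2_ge r hr i
  have hApos := A2_pos r hr
  have hri := hr i
  rw [div_lt_one (by nlinarith)]
  nlinarith

lemma rho_sq (i : Fin n) : rho r i ^ 2 = r i ^ 2 - ss r i ^ 2 := by
  have h1 := ss_sq_lt_one r hr i
  have hri := hr i
  apply Real.sq_sqrt; nlinarith

lemma rho_pos (i : Fin n) : 0 < rho r i := by
  have h1 := ss_sq_lt_one r hr i
  have hri := hr i
  apply Real.sqrt_pos.2; nlinarith

lemma ident (i : Fin n) : rho r i ^ 2 + 4 * A2 r * ss r i ^ 2 = A2 r := by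
  have h1 := ss_sq r hr i
  have h2 := rho_sq r hr i
  have hA := A2_ge r hr i
  have hApos := A2_pos r hr
  have h4 : (4 : ℝ) * A2 r - 1 ≠ 0 := by nlinarith
  rw [h2, h1]; linear_combination div_mul_cancel₀ (A2 r - r i ^ 2) h4

end basic

lemma val_cases (i : Fin n) :
    (i:ℕ) = 0 ∨ (i:ℕ) = 1 ∨ (i:ℕ) = 2 ∨ (i:ℕ) = 3 ∨ 4 ≤ (i:ℕ) := by omega

lemma cval0 {i : Fin n} (h : (i:ℕ) = 0) : cc i = 1 := by simp [cc, h]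
lemma cval1 {i : Fin n} (h : (i:ℕ) = 1) : cc i = -1 := by simp [cc, h]
lemma cval2 {i : Fin n} (h : (i:ℕ) = 2) : cc i = 0 := by simp [cc, h]
lemma cval3 {i : Fin n} (h : (i:ℕ) = 3) : cc i = 0 := by simp [cc, h]
lemma tval0 {i : Fin n} (h : (i:ℕ) = 0) : tt i = 0 := by simp [tt, h]
lemma tval1 {i : Fin n} (h : (i:ℕ) = 1) : tt i = 0 := by simp [tt, h]
lemma tval2 {i : Fin n} (h : (i:ℕ) = 2) : tt i = 1 := by simp [tt, h]
lemma tval3 {i : Fin n} (h : (i:ℕ) = 3) : tt i = -1 := by simp [tt, h]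
lemma cvalB {i : Fin n} (h : 4 ≤ (i:ℕ)) :
    cc i = (1 - tau i ^ 2) / (1 + tau i ^ 2) := by
  unfold cc; split_ifs <;> (try rfl) <;> omega
lemma tvalB {i : Fin n} (h : 4 ≤ (i:ℕ)) :
    tt i = 2 * tau i / (1 + tau i ^ 2) := by
  unfold tt; split_ifs <;> (try rfl) <;> omega

lemma unit_dir (i : Fin n) : cc i ^ 2 + tt i ^ 2 = 1 := by
  have ht : (0:ℝ) < 1 + tau i ^ 2 := by positivity
  have ht' : (1 + tau i ^ 2 : ℝ) ≠ 0 := ne_of_gt ht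
  rcases val_cases i with h|h|h|h|h
  · rw [cval0 h, tval0 h]; norm_num
  · rw [cval1 h, tval1 h]; norm_num
  · rw [cval2 h, tval2 h]; norm_num
  · rw [cval3 h, tval3 h]; norm_num
  · rw [cvalB h, tvalB h]; field_simp; ring

lemma eps_cases (i : Fin n) : eps i = 1 ∨ eps i = -1 := by
  unfold eps; split_ifs <;> simp

lemma tau_ge (i : Fin n) (h : 4 ≤ (i : ℕ)) : 2 ≤ tau i := by
  unfold tau
  have : (4 : ℝ) ≤ (i : ℕ) := by exact_mod_cast h
  linarith

lemma cc_big (i : Fin n) (h : 4 ≤ (i : ℕ)) : -1 < cc i ∧ cc i < 0 := by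
  have h2 := tau_ge i h
  have ht : (0:ℝ) < 1 + tau i ^ 2 := by positivity
  rw [cvalB h]
  constructor
  · rw [lt_div_iff₀ ht]; nlinarith
  · apply div_neg_of_neg_of_pos _ ht; nlinarith

lemma tt_big (i : Fin n) (h : 4 ≤ (i : ℕ)) : 0 < tt i ∧ tt i < 1 := by
  have h2 := tau_ge i h
  have ht : (0:ℝ) < 1 + tau i ^ 2 := by positivity
  rw [tvalB h]
  constructor
  · apply div_pos _ ht; linarith
  · rw [div_lt_one ht]; nlinarith

lemma dir_ne (i j : Fin n) (hij : i ≠ j) : ¬ (cc i = cc j ∧ tt i = tt j) := by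
  rintro ⟨hc, ht⟩
  have hvne : (i : ℕ) ≠ (j : ℕ) := fun h => hij (Fin.ext h)
  rcases val_cases i with h1|h1|h1|h1|h1 <;> rcases val_cases j with h2|h2|h2|h2|h2
  · omega
  · rw [cval0 h1, cval1 h2] at hc; norm_num at hc
  · rw [cval0 h1, cval2 h2] at hc; norm_num at hc
  · rw [cval0 h1, cval3 h2] at hc; norm_num at hc
  · rw [cval0 h1] at hc; linarith [(cc_big j h2).2]
  · rw [cval1 h1, cval0 h2] at hc; norm_num at hc
  · omega
  · rw [cval1 h1, cval2 h2] at hc; norm_num at hc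
  · rw [cval1 h1, cval3 h2] at hc; norm_num at hc
  · rw [cval1 h1] at hc; linarith [(cc_big j h2).1]
  · rw [cval2 h1, cval0 h2] at hc; norm_num at hc
  · rw [cval2 h1, cval1 h2] at hc; norm_num at hc
  · omega
  · rw [tval2 h1, tval3 h2] at ht; norm_num at ht
  · rw [tval2 h1] at ht; linarith [(tt_big j h2).2]
  · rw [tval3 h1, tval0 h2] at ht; norm_num at ht
  · rw [tval3 h1, tval1 h2] at ht; norm_num at ht
  · rw [tval3 h1, tval2 h2] at ht; norm_num at ht
  · omega
  · rw [tval3 h1] at ht; linarith [(tt_big j h2).1]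
  · rw [cval0 h2] at hc; linarith [(cc_big i h1).2]
  · rw [cval1 h2] at hc; linarith [(cc_big i h1).1]
  · rw [tval2 h2] at ht; linarith [(tt_big i h1).2]
  · rw [tval3 h2] at ht; linarith [(tt_big i h1).1]
  · -- both big
    have h2i := tau_ge i h1
    have h2j := tau_ge j h2
    have hti : (0:ℝ) < 1 + tau i ^ 2 := by positivity
    have htj : (0:ℝ) < 1 + tau j ^ 2 := by positivity
    rw [tvalB h1, tvalB h2, div_eq_div_iff hti.ne' htj.ne'] at ht
    have htaueq : tau i = tau j := by
      have hfact : (tau i - tau j) * (1 - tau i * tau j) = 0 := by nlinarith [ht]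
      rcases mul_eq_zero.1 hfact with h | h
      · linarith
      · nlinarith
    have : ((i : ℕ) : ℝ) = ((j : ℕ) : ℝ) := by unfold tau at htaueq; linarith
    exact hvne (by exact_mod_cast this)

lemma dir_inner_lt_one (i j : Fin n) (hij : i ≠ j) : cc i * cc j + tt i * tt j < 1 := by
  have hne := dir_ne i j hij
  have hui := unit_dir i
  have huj := unit_dir j
  have h : 0 < (cc i - cc j) ^ 2 + (tt i - tt j) ^ 2 := by
    rcases eq_or_ne (cc i) (cc j) with hc | hc
    · have htne : tt i ≠ tt j := fun h => hne ⟨hc, h⟩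
      have h2 := sub_ne_zero.2 htne
      positivity
    · have h2 := sub_ne_zero.2 hc
      positivity
  nlinarith


noncomputable def Pt (r : Fin n → ℝ) (i : Fin n) : EuclideanSpace ℝ (Fin 3) :=
  !₂[rho r i * cc i, rho r i * tt i, eps i * ss r i]

lemma eps_sq (i : Fin n) : eps i ^ 2 = 1 := by
  rcases eps_cases i with h|h <;> rw [h] <;> norm_num

set_option maxHeartbeats 1000000 in
lemma interior_cross (p0 p1 p2 p3 s0 s1 s2 s3 : ℝ)
    (hp0 : 0 < p0) (hp1 : 0 < p1) (hp2 : 0 < p2) (hp3 : 0 < p3)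
    (hs0 : 0 < s0) (hs1 : 0 < s1) (hs2 : 0 < s2) (hs3 : 0 < s3) :
    (0 : EuclideanSpace ℝ (Fin 3)) ∈ interior (convexHull ℝ (Set.range
      (![!₂[p0, 0, s0], !₂[-p1, 0, s1], !₂[0, p2, -s2], !₂[0, -p3, -s3]] :
        Fin 4 → EuclideanSpace ℝ (Fin 3)))) := by
  set Q : Fin 4 → EuclideanSpace ℝ (Fin 3) :=
    ![!₂[p0, 0, s0], !₂[-p1, 0, s1], !₂[0, p2, -s2], !₂[0, -p3, -s3]] with hQ
  have hQ0 : Q 0 = !₂[p0, 0, s0] := rfl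
  have hQ1 : Q 1 = !₂[-p1, 0, s1] := rfl
  have hQ2 : Q 2 = !₂[0, p2, -s2] := rfl
  have hQ3 : Q 3 = !₂[0, -p3, -s3] := rfl
  have hAI : AffineIndependent ℝ Q := by
    rw [affineIndependent_iff_of_fintype]
    intro wt hw hz
    rw [Finset.weightedVSub_eq_linear_combination _ hw] at hz
    have hx := congrArg (fun v : EuclideanSpace ℝ (Fin 3) => v 0) hz
    have hy := congrArg (fun v : EuclideanSpace ℝ (Fin 3) => v 1) hz
    have hzz := congrArg (fun v : EuclideanSpace ℝ (Fin 3) => v 2) hz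
    simp [hQ, Fin.sum_univ_four] at hx hy hzz
    simp [Fin.sum_univ_four] at hw
    have hA : wt 0 * (p3 * (s0 * p1 + p0 * s1)) - wt 2 * (p1 * (s2 * p3 + p2 * s3)) = 0 := by
      linear_combination (p1 * p3) * hzz + (s1 * p3) * hx - (s3 * p1) * hy
    have hB : wt 0 * (p1 * p3 + p0 * p3) + wt 2 * (p1 * p3 + p2 * p1) = 0 := by
      linear_combination (p1 * p3) * hw + p3 * hx + p1 * hy
    have h2 : wt 2 = 0 := by
      have hcomb : wt 2 * ((p1 * (s2 * p3 + p2 * s3)) * (p1 * p3 + p0 * p3)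
          + (p3 * (s0 * p1 + p0 * s1)) * (p1 * p3 + p2 * p1)) = 0 := by
        linear_combination (p3 * (s0 * p1 + p0 * s1)) * hB - (p1 * p3 + p0 * p3) * hA
      have hpos : 0 < (p1 * (s2 * p3 + p2 * s3)) * (p1 * p3 + p0 * p3)
          + (p3 * (s0 * p1 + p0 * s1)) * (p1 * p3 + p2 * p1) := by positivity
      rcases mul_eq_zero.1 hcomb with h | h
      · exact h
      · exact absurd h hpos.ne'
    have h0 : wt 0 = 0 := by
      have hc : wt 0 * (p3 * (s0 * p1 + p0 * s1)) = 0 := by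
        linear_combination hA + (p1 * (s2 * p3 + p2 * s3)) * h2
      rcases mul_eq_zero.1 hc with h | h
      · exact h
      · exact absurd h (by positivity : (0:ℝ) < p3 * (s0 * p1 + p0 * s1)).ne'
    have h1 : wt 1 = 0 := by
      have hc : wt 1 * p1 = 0 := by linear_combination -hx + p0 * h0
      rcases mul_eq_zero.1 hc with h | h
      · exact h
      · exact absurd h hp1.ne'
    have h3 : wt 3 = 0 := by
      have hc : wt 3 * p3 = 0 := by linear_combination -hy + p2 * h2
      rcases mul_eq_zero.1 hc with h | h
      · exact h
      · exact absurd h hp3.ne'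
    intro k
    fin_cases k <;> assumption
  have htop : affineSpan ℝ (Set.range Q) = ⊤ := by
    rw [hAI.affineSpan_eq_top_iff_card_eq_finrank_add_one]
    simp
  let b : AffineBasis (Fin 4) ℝ (EuclideanSpace ℝ (Fin 3)) := ⟨Q, hAI, htop⟩
  have haapos : 0 < s0 / p0 + s1 / p1 := add_pos (div_pos hs0 hp0) (div_pos hs1 hp1)
  have hbbpos : 0 < s2 / p2 + s3 / p3 := add_pos (div_pos hs2 hp2) (div_pos hs3 hp3)
  have hZpos : 0 < (s2 / p2 + s3 / p3) / p0 + (s2 / p2 + s3 / p3) / p1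
      + (s0 / p0 + s1 / p1) / p2 + (s0 / p0 + s1 / p1) / p3 := by positivity
  set Z : ℝ := (s2 / p2 + s3 / p3) / p0 + (s2 / p2 + s3 / p3) / p1
      + (s0 / p0 + s1 / p1) / p2 + (s0 / p0 + s1 / p1) / p3 with hZdef
  set lam : Fin 4 → ℝ := ![(s2 / p2 + s3 / p3) / p0 / Z, (s2 / p2 + s3 / p3) / p1 / Z,
      (s0 / p0 + s1 / p1) / p2 / Z, (s0 / p0 + s1 / p1) / p3 / Z] with hlam
  have hlam1 : ∑ k, lam k = 1 := by
    simp only [hlam, Fin.sum_univ_four, Matrix.cons_val_zero, Matrix.cons_val_one,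
      Matrix.head_cons, Matrix.cons_val_two, Matrix.tail_cons, Matrix.cons_val_three]
    rw [hZdef]
    field_simp
  have hlampos : ∀ k, 0 < lam k := by
    intro k
    fin_cases k
    · exact div_pos (div_pos hbbpos hp0) hZpos
    · exact div_pos (div_pos hbbpos hp1) hZpos
    · exact div_pos (div_pos haapos hp2) hZpos
    · exact div_pos (div_pos haapos hp3) hZpos
  have hcomb : Finset.univ.affineCombination ℝ Q lam = 0 := by
    rw [Finset.affineCombination_eq_linear_combination _ _ _ hlam1]
    ext l
    fin_cases l <;>
      · simp only [hlam, hQ, Fin.sum_univ_four, Matrix.cons_val_zero, Matrix.cons_val_one,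
          Matrix.head_cons, Matrix.cons_val_two, Matrix.tail_cons, Matrix.cons_val_three,
          PiLp.add_apply, PiLp.smul_apply, PiLp.zero_apply, smul_eq_mul, PiLp.toLp_apply,
            Fin.zero_eta, Fin.mk_one, Fin.reduceFinMk]
        rw [hZdef]
        field_simp
        ring
  have hcoord : ∀ k, b.coord k (0 : EuclideanSpace ℝ (Fin 3)) = lam k := by
    intro k
    have h := b.coord_apply_combination_of_mem (Finset.mem_univ k) hlam1
    rw [show ⇑b = Q from rfl, hcomb] at h
    exact h
  have hint : (0 : EuclideanSpace ℝ (Fin 3)) ∈ interior (convexHull ℝ (Set.range Q)) := by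
    have hic := b.interior_convexHull
    rw [show Set.range ⇑b = Set.range Q from rfl] at hic
    rw [hic]
    simp only [Set.mem_setOf_eq]
    intro k
    rw [hcoord k]
    exact hlampos k
  exact hint

section withr
variable (r : Fin n → ℝ) (hr : ∀ i, 1 ≤ r i)
include hr

lemma norm_Pt (i : Fin n) : ‖Pt r i‖ = r i := by
  have hsum : ∑ k, ‖(Pt r i) k‖ ^ 2 = r i ^ 2 := by
    simp only [Fin.sum_univ_three, Pt, Matrix.cons_val_zero, Matrix.cons_val_one,
      Matrix.head_cons, Matrix.cons_val_two, Matrix.tail_cons, Real.norm_eq_abs, sq_abs,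
        PiLp.toLp_apply]
    have h1 := unit_dir i
    have h2 := rho_sq r hr i
    have h3 := eps_sq i
    nlinarith [h1, h2, h3]
  rw [EuclideanSpace.norm_eq, hsum]
  exact Real.sqrt_sq (r_pos r hr i).le

lemma key_lt (i j : Fin n) (hij : i ≠ j) :
    (rho r i * cc i) * (rho r j * cc j) + (rho r i * tt i) * (rho r j * tt j)
      + 4 * A2 r * ((eps i * ss r i) * (eps j * ss r j)) < A2 r := by
  have hD := dir_inner_lt_one i j hij
  have hDm : -1 ≤ cc i * cc j + tt i * tt j := by
    nlinarith [sq_nonneg (cc i + cc j), sq_nonneg (tt i + tt j), unit_dir i, unit_dir j]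
  have hIi := ident r hr i
  have hIj := ident r hr j
  have hri := rho_pos r hr i
  have hrj := rho_pos r hr j
  have hsi := ss_pos r hr i
  have hsj := ss_pos r hr j
  have hA := A2_pos r hr
  have hsum : rho r i * rho r j + 4 * A2 r * (ss r i * ss r j) ≤ A2 r := by
    nlinarith [sq_nonneg (rho r i - rho r j),
      mul_nonneg hA.le (sq_nonneg (ss r i - ss r j))]
  have hprod : 0 < rho r i * rho r j := mul_pos hri hrj
  have hsprod : 0 < ss r i * ss r j := mul_pos hsi hsj
  rcases eps_cases i with he1|he1 <;> rcases eps_cases j with he2|he2 <;> rw [he1, he2] <;>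
    nlinarith [mul_pos hprod hsprod, mul_pos hA hsprod]

omit hr in
lemma inner_formula (v x : EuclideanSpace ℝ (Fin 3)) :
    ⟪v, x⟫ = v 0 * x 0 + v 1 * x 1 + v 2 * x 2 := by
  simp [PiLp.inner_apply, RCLike.inner_apply, Fin.sum_univ_three]; ring

noncomputable def Vf (r : Fin n → ℝ) (i : Fin n) : EuclideanSpace ℝ (Fin 3) :=
  !₂[rho r i * cc i / A2 r, rho r i * tt i / A2 r, 4 * (eps i * ss r i)]

lemma not_mem_hull (i : Fin n) :
    Pt r i ∉ convexHull ℝ (Pt r '' {j | j ≠ i}) := by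
  intro hmem
  have hA := A2_pos r hr
  have hval : ∀ j : Fin n, ⟪Vf r i, Pt r j⟫ =
      ((rho r i * cc i) * (rho r j * cc j) + (rho r i * tt i) * (rho r j * tt j)
        + 4 * A2 r * ((eps i * ss r i) * (eps j * ss r j))) / A2 r := by
    intro j
    have h1 : ⟪Vf r i, Pt r j⟫ =
        (rho r i * cc i / A2 r) * (rho r j * cc j) + (rho r i * tt i / A2 r) * (rho r j * tt j)
          + (4 * (eps i * ss r i)) * (eps j * ss r j) := by
      rw [inner_formula]; rfl
    rw [h1]
    field_simp
  have hconv : Convex ℝ {x : EuclideanSpace ℝ (Fin 3) | ⟪Vf r i, x⟫ < 1} :=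
    convex_halfSpace_lt ⟨fun a b => inner_add_right _ a b, fun c x => real_inner_smul_right _ x c⟩ 1
  have hsub : Pt r '' {j | j ≠ i} ⊆ {x : EuclideanSpace ℝ (Fin 3) | ⟪Vf r i, x⟫ < 1} := by
    rintro x ⟨j, hj, rfl⟩
    have hij : i ≠ j := Ne.symm hj
    show ⟪Vf r i, Pt r j⟫ < 1
    rw [hval j, div_lt_one hA]
    exact key_lt r hr i j hij
  have hle := convexHull_min hsub hconv hmem
  have hself : ⟪Vf r i, Pt r i⟫ = 1 := by
    rw [hval i, div_eq_one_iff_eq hA.ne']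
    linear_combination (rho r i ^ 2) * unit_dir i + (4 * A2 r * ss r i ^ 2) * eps_sq i
      + ident r hr i
  rw [Set.mem_setOf_eq, hself] at hle
  exact lt_irrefl _ hle

lemma zero_mem_interior (hn : 4 ≤ n) :
    (0 : EuclideanSpace ℝ (Fin 3)) ∈ interior (convexHull ℝ (Set.range (Pt r))) := by
  have h0 := interior_cross (rho r ⟨0, by omega⟩) (rho r ⟨1, by omega⟩)
    (rho r ⟨2, by omega⟩) (rho r ⟨3, by omega⟩) (ss r ⟨0, by omega⟩) (ss r ⟨1, by omega⟩)
    (ss r ⟨2, by omega⟩) (ss r ⟨3, by omega⟩)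
    (rho_pos r hr _) (rho_pos r hr _) (rho_pos r hr _) (rho_pos r hr _)
    (ss_pos r hr _) (ss_pos r hr _) (ss_pos r hr _) (ss_pos r hr _)
  refine Set.mem_of_subset_of_mem (interior_mono (convexHull_mono ?_)) h0
  rintro x ⟨k, rfl⟩
  fin_cases k
  · refine ⟨⟨0, by omega⟩, ?_⟩
    have h : (((⟨0, by omega⟩ : Fin n)) : ℕ) = 0 := rfl
    simp [Pt, cval0 h, tval0 h, eps, h]
  · refine ⟨⟨1, by omega⟩, ?_⟩
    have h : (((⟨1, by omega⟩ : Fin n)) : ℕ) = 1 := rfl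
    simp [Pt, cval1 h, tval1 h, eps, h]
  · refine ⟨⟨2, by omega⟩, ?_⟩
    have h : (((⟨2, by omega⟩ : Fin n)) : ℕ) = 2 := rfl
    simp [Pt, cval2 h, tval2 h, eps, h]
  · refine ⟨⟨3, by omega⟩, ?_⟩
    have h : (((⟨3, by omega⟩ : Fin n)) : ℕ) = 3 := rfl
    simp [Pt, cval3 h, tval3 h, eps, h]

end withr

end Stmt13Aux

theorem stmt13 (n : ℕ) (hn : 4 ≤ n) (w : Fin n → ℝ)
    (hw : ∀ i, 0 ≤ w i ∧ w i < Real.pi / 2) :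
    ∃ P : Fin n → EuclideanSpace ℝ (Fin 3),
      (∀ i, ‖P i‖ = 1 / Real.cos (w i)) ∧
      (∀ i, P i ∉ convexHull ℝ (P '' {j | j ≠ i})) ∧
      (0 : EuclideanSpace ℝ (Fin 3)) ∈ interior (convexHull ℝ (Set.range P)) := by
  set r : Fin n → ℝ := fun i => 1 / Real.cos (w i) with hrdef
  have hr : ∀ i, 1 ≤ r i := by
    intro i
    have hcpos : 0 < Real.cos (w i) :=
      Real.cos_pos_of_mem_Ioo ⟨by linarith [(hw i).1, Real.pi_pos], (hw i).2⟩
    have hcle : Real.cos (w i) ≤ 1 := Real.cos_le_one _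
    rw [hrdef]
    rw [le_div_iff₀ hcpos]; linarith
  exact ⟨Stmt13Aux.Pt r, fun i => Stmt13Aux.norm_Pt r hr i,
    fun i => Stmt13Aux.not_mem_hull r hr i, Stmt13Aux.zero_mem_interior r hr hn⟩
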